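/- Let $(V, \mu)$ be an associative algebra and $R : V \to V$ a Rota-Baxter operator of weight 0. Then the map $T : V^{\otimes 2} \to V^{\otimes 2}$ defined by $T(a \otimes b) = a \otimes R(b) + R(a) \otimes b$ is a weak pseudotwistor with weak companion $\tau(a \otimes b \otimes c) = R(a) \otimes R(b) \otimes c + R(a) \otimes b \otimes R(c) + a \otimes R(b) \otimes R(c)$. -/

import Mathlib

open TensorProduct

/-- If `R` is a Rota-Baxter operator of weight 0 on an associative algebra
`(V, μ)`, then `T(a ⊗ b) = a ⊗ R(b) + R(a) ⊗ b` is a weak pseudotwistor with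
weak companion `τ(a ⊗ b ⊗ c) = R(a) ⊗ R(b) ⊗ c + R(a) ⊗ b ⊗ R(c) + a ⊗ R(b) ⊗ R(c)`. -/
theorem rotaBaxter_gives_weakPseudotwistor {K V : Type*} [Field K] [AddCommGroup V] [Module K V]
    (μ : V ⊗[K] V →ₗ[K] V)
    (hassoc : ∀ a b c : V, μ (μ (a ⊗ₜ b) ⊗ₜ c) = μ (a ⊗ₜ μ (b ⊗ₜ c)))
    (R : V →ₗ[K] V)
    (hR : ∀ a b : V, μ (R a ⊗ₜ R b) = R (μ (a ⊗ₜ R b) + μ (R a ⊗ₜ b)))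
    (T : V ⊗[K] V →ₗ[K] V ⊗[K] V)
    (hT : T = TensorProduct.map LinearMap.id R + TensorProduct.map R LinearMap.id)
    (τ : V ⊗[K] (V ⊗[K] V) →ₗ[K] V ⊗[K] (V ⊗[K] V))
    (hτ : τ = TensorProduct.map R (TensorProduct.map R LinearMap.id) +
        TensorProduct.map R (TensorProduct.map LinearMap.id R) +
        TensorProduct.map LinearMap.id (TensorProduct.map R R)) :
    T ∘ₗ TensorProduct.map LinearMap.id (μ ∘ₗ T) =
        TensorProduct.map LinearMap.id μ ∘ₗ τ ∧
    T ∘ₗ TensorProduct.map (μ ∘ₗ T) LinearMap.id =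
        TensorProduct.map μ LinearMap.id ∘ₗ
          ((TensorProduct.assoc K V V V).symm.toLinearMap ∘ₗ τ ∘ₗ
            (TensorProduct.assoc K V V V).toLinearMap) := by
  subst hT hτ
  constructor
  · apply TensorProduct.ext
    apply LinearMap.ext; intro a
    apply TensorProduct.ext'
    intro b c
    simp only [LinearMap.compr₂_apply, LinearMap.compr₂ₛₗ_apply, TensorProduct.mk_apply, LinearMap.comp_apply,
      LinearMap.add_apply, TensorProduct.map_tmul, LinearMap.id_apply, map_add,
      TensorProduct.tmul_add, TensorProduct.add_tmul, hR]
    abel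
  · apply TensorProduct.ext
    apply TensorProduct.ext'
    intro a b
    apply LinearMap.ext; intro c
    simp only [LinearMap.compr₂_apply, LinearMap.compr₂ₛₗ_apply, TensorProduct.mk_apply, LinearMap.comp_apply,
      LinearMap.add_apply, TensorProduct.map_tmul, LinearMap.id_apply, map_add,
      LinearEquiv.coe_coe, TensorProduct.assoc_tmul, TensorProduct.assoc_symm_tmul,
      TensorProduct.tmul_add, TensorProduct.add_tmul, hR]
    abel
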